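/- If G and G' are Dijkstra graphs with C(G) = C(G'), then the map f sending each vertex v of G to the vertex v' of G' whose associated 1 occupies the same position in the code string is a graph isomorphism from G to G'. -/

import Mathlib

namespace DJ

/-- A directed graph with vertex set a finite set of naturals, a distinguished
source `src` and a distinguished sink `snk` (a "source-sink" flow graph). -/
structure SSG where
  verts : Finset ℕ
  edges : Finset (ℕ × ℕ)
  src : ℕ
  snk : ℕ
deriving DecidableEq

def Edge (G : SSG) (a b : ℕ) : Prop := (a, b) ∈ G.edges

/-- `a` reaches `b` by a directed path. -/
def Reaches (G : SSG) : ℕ → ℕ → Prop := Relation.ReflTransGen (Edge G)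

/-- The trivial (one-vertex) statement graph. -/
def trivG (x : ℕ) : SSG := ⟨{x}, ∅, x, x⟩
/-- Sequence statement graph. -/
def seqG : SSG := ⟨{0, 1}, {(0, 1)}, 0, 1⟩
/-- If-then statement graph. -/
def ifG : SSG := ⟨{0, 1, 2}, {(0, 1), (1, 2), (0, 2)}, 0, 2⟩
/-- If-then-else statement graph. -/
def iteG : SSG := ⟨{0, 1, 2, 3}, {(0, 1), (0, 2), (1, 3), (2, 3)}, 0, 3⟩
/-- p-case statement graph (meaningful for `3 ≤ p`). -/
def caseG (p : ℕ) : SSG :=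
  ⟨insert 0 (insert (p + 1) ((Finset.range p).image (· + 1))),
   ((Finset.range p).image (fun i => (0, i + 1))) ∪
     ((Finset.range p).image (fun i => (i + 1, p + 1))), 0, p + 1⟩
/-- While statement graph: source 0, body 1, sink 2; sink is out-neighbor of source. -/
def whileG : SSG := ⟨{0, 1, 2}, {(0, 1), (1, 0), (0, 2)}, 0, 2⟩
/-- Repeat statement graph: source 0, body 1, sink 2; sink not out-neighbor of source. -/
def repeatG : SSG := ⟨{0, 1, 2}, {(0, 1), (1, 0), (1, 2)}, 0, 2⟩

/-- `f` is an isomorphism of directed graphs from `G` to `G'`. -/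
def IsIsoFun (f : ℕ → ℕ) (G G' : SSG) : Prop :=
  Set.BijOn f ↑G.verts ↑G'.verts ∧
    ∀ a ∈ G.verts, ∀ b ∈ G.verts, ((a, b) ∈ G.edges ↔ (f a, f b) ∈ G'.edges)

/-- Isomorphism of flow graphs (must map source to source). -/
def FIso (G G' : SSG) : Prop := ∃ f, IsIsoFun f G G' ∧ f G.src = G'.src

/-- Isomorphism of source-sink graphs (must map source to source and sink to sink). -/
def SSIso (G G' : SSG) : Prop :=
  ∃ f, IsIsoFun f G G' ∧ f G.src = G'.src ∧ f G.snk = G'.snk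

/-- `H` is (source-sink isomorphic to) a non-trivial statement graph. -/
def IsNTStmt (H : SSG) : Prop :=
  SSIso H seqG ∨ SSIso H ifG ∨ SSIso H iteG ∨
    (∃ p, 3 ≤ p ∧ SSIso H (caseG p)) ∨ SSIso H whileG ∨ SSIso H repeatG

/-- `H` is a statement graph (trivial or non-trivial). -/
def IsStmt (H : SSG) : Prop := (∃ x, SSIso H (trivG x)) ∨ IsNTStmt H

/-- Expansion of vertex `v` of `G` into the source-sink graph `H`:
in-neighbors of `v` become in-neighbors of `s(H)`, out-neighbors of `v` become
out-neighbors of `t(H)`; other adjacencies unchanged. -/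
def expand (G : SSG) (v : ℕ) (H : SSG) : SSG where
  verts := (G.verts \ {v}) ∪ H.verts
  edges :=
    (G.edges.filter (fun e => e.1 ≠ v ∧ e.2 ≠ v)) ∪ H.edges ∪
      ((G.edges.filter (fun e => e.2 = v ∧ e.1 ≠ v)).image (fun e => (e.1, H.src))) ∪
      ((G.edges.filter (fun e => e.1 = v ∧ e.2 ≠ v)).image (fun e => (H.snk, e.2)))
  src := if v = G.src then H.src else G.src
  snk := if v = G.snk then H.snk else G.snk

/-- Dijkstra graphs with their set `X` of expansible (X-labeled) vertices:
built from the trivial graph by expanding X-vertices into non-trivial statement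
graphs; after an expansion the source of the statement graph becomes regular. -/
inductive IsDGX : SSG → Finset ℕ → Prop
  | base (v : ℕ) : IsDGX (trivG v) {v}
  | expand {G : SSG} {X : Finset ℕ} {H : SSG} (v : ℕ) :
      IsDGX G X → v ∈ X → IsNTStmt H → Disjoint G.verts H.verts →
      IsDGX (expand G v H) ((X \ {v}) ∪ (H.verts \ {H.src}))

/-- `G` is a Dijkstra graph. -/
def IsDG (G : SSG) : Prop := ∃ X, IsDGX G X

/-- `d` dominates `u`: every directed path from the source of `G` to `u` passes
through `d`. -/
def Dominates (G : SSG) (d u : ℕ) : Prop :=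
  ∀ l : List ℕ, l.Chain' (Edge G) → l.head? = some G.src → l.getLast? = some u → d ∈ l

/-- A cycle edge (back edge) of a reducible flow graph: an edge whose head
dominates its tail. -/
def CycleEdge (G : SSG) (a b : ℕ) : Prop := (a, b) ∈ G.edges ∧ Dominates G b a

/-- `l` is (the vertex list of) a directed cycle of `G`. -/
def IsCycle (G : SSG) (l : List ℕ) : Prop :=
  l ≠ [] ∧ l.Chain' (Edge G) ∧
    ∃ a b, l.head? = some a ∧ l.getLast? = some b ∧ (b, a) ∈ G.edges

/-- `G` is reducible: every cycle is single-entry, i.e. contains a vertex `v`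
such that every path from the source to another vertex of the cycle passes
through `v`. -/
def Reducible (G : SSG) : Prop :=
  ∀ l, IsCycle G l → ∃ v ∈ l, ∀ u ∈ l, u ≠ v → Dominates G v u

/-- `H` is an induced subgraph of `G`. -/
def IsInduced (H G : SSG) : Prop :=
  H.verts ⊆ G.verts ∧ H.edges = G.edges.filter (fun e => e.1 ∈ H.verts ∧ e.2 ∈ H.verts)

/-- `H` is closed in `G`. -/
def Closed (H G : SSG) : Prop :=
  (∀ x ∈ H.verts, x ≠ H.src → ∀ u, (u, x) ∈ G.edges → u ∈ H.verts) ∧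
  (∀ x ∈ H.verts, x ≠ H.snk → ∀ w, (x, w) ∈ G.edges → w ∈ H.verts) ∧
  (∀ u, CycleEdge G u H.src → (H.src, u) ∈ G.edges)

/-- `H` is a non-trivial prime subgraph of `G`. -/
def IsPrime (H G : SSG) : Prop := IsInduced H G ∧ IsNTStmt H ∧ Closed H G

/-- Image of a vertex under contraction of `H` into its source. -/
def imgV (H : SSG) (x : ℕ) : ℕ := if x ∈ H.verts then H.src else x

/-- Contraction `G↓H`: coalesce `V(H)` into `s(H)`, removing loops and
parallel edges. -/
def contract (G H : SSG) : SSG where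
  verts := (G.verts \ H.verts) ∪ {H.src}
  edges := (G.edges.image (fun e => (imgV H e.1, imgV H e.2))).filter (fun e => e.1 ≠ e.2)
  src := imgV H G.src
  snk := imgV H G.snk

/-- Subgraph of `G` induced on `S`, with prescribed source and sink. -/
def inducedOn (G : SSG) (S : Finset ℕ) (s t : ℕ) : SSG :=
  ⟨S, G.edges.filter (fun e => e.1 ∈ S ∧ e.2 ∈ S), s, t⟩

/-- Image `I_{G↓H}(H')` of the subgraph `H'` in the contracted graph `G↓H`. -/
def imgSub (G H H' : SSG) : SSG :=
  inducedOn (contract G H) (H'.verts.image (imgV H)) (imgV H H'.src) (imgV H H'.snk)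

/-- `Gs 0, …, Gs k` is a contractile sequence of `G`. -/
def ContrSeq (G : SSG) (Gs : ℕ → SSG) (k : ℕ) : Prop :=
  FIso G (Gs 0) ∧
    ∀ i < k, ∃ H, IsPrime H (Gs i) ∧ FIso (Gs (i + 1)) (contract (Gs i) H)

/-- The contractile sequence ending at index `k` is maximal. -/
def MaximalSeq (Gs : ℕ → SSG) (k : ℕ) : Prop := ¬ ∃ H, IsPrime H (Gs k)

/-- Reachability avoiding cycle edges (descendant relation in `G` minus its
cycle edges). -/
def NCReach (G : SSG) : ℕ → ℕ → Prop :=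
  Relation.ReflTransGen (fun a b => (a, b) ∈ G.edges ∧ ¬ CycleEdge G a b)

end DJ
namespace DJ

/-- Lexicographic comparison of integer strings. -/
def lexLe : List ℕ → List ℕ → Bool
  | [], _ => true
  | _ :: _, [] => false
  | a :: as, b :: bs => if a < b then true else if b < a then false else lexLe as bs

/-- Parse trees of structured programs, with vertex names: each constructor
corresponds to a statement graph whose expansible positions carry subprograms. -/
inductive Prog where
  | leaf (v : ℕ)
  | seq (v : ℕ) (b : Prog)
  | ifThen (v : ℕ) (a t : Prog)
  | ite (v : ℕ) (a b t : Prog)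
  | pcase (v : ℕ) (bs : List Prog) (t : Prog)
  | whileP (v : ℕ) (a t : Prog)
  | repeatP (v : ℕ) (a t : Prog)

/-- The code `C` of a structured program, as in the isomorphism algorithm. -/
def code : Prog → List ℕ
  | .leaf _ => [1]
  | .seq _ b => 1 :: 2 :: code b
  | .ifThen _ a t => 1 :: 3 :: (code a ++ code t)
  | .ite _ a b t =>
      1 :: 6 :: ((if lexLe (code a) (code b) then code a ++ code b
                  else code b ++ code a) ++ code t)
  | .pcase _ bs t =>
      1 :: (bs.length + 4) ::
        ((((bs.attach.map (fun p => code p.1)).mergeSort (fun x y => lexLe x y)).flatten)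
          ++ code t)
  | .whileP _ a t => 1 :: 4 :: (code a ++ code t)
  | .repeatP _ a t => 1 :: 5 :: (code a ++ code t)
  termination_by P => sizeOf P
  decreasing_by all_goals
    first
      | (have := List.sizeOf_lt_of_mem p.2; simp +arith +decide at this ⊢; omega)
      | (simp +arith +decide)
      | (simp +arith +decide; omega)


/-- The vertices of a program in code order: the i-th vertex corresponds to the
i-th symbol `1` of the code. -/
def vlist : Prog → List ℕ
  | .leaf v => [v]
  | .seq v b => v :: vlist b
  | .ifThen v a t => v :: (vlist a ++ vlist t)
  | .ite v a b t =>
      v :: ((if lexLe (code a) (code b) then vlist a ++ vlist b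
             else vlist b ++ vlist a) ++ vlist t)
  | .pcase v bs t =>
      v :: ((((bs.attach.map (fun p => (code p.1, vlist p.1))).mergeSort
                (fun x y => lexLe x.1 y.1)).flatMap Prod.snd) ++ vlist t)
  | .whileP v a t => v :: (vlist a ++ vlist t)
  | .repeatP v a t => v :: (vlist a ++ vlist t)
  termination_by P => sizeOf P
  decreasing_by all_goals
    first
      | (have := List.sizeOf_lt_of_mem p.2; simp +arith +decide at this ⊢; omega)
      | (simp +arith +decide)
      | (simp +arith +decide; omega)


/-- Number of prime contractions needed to reduce the program's graph to a
trivial vertex (= number of non-leaf nodes of the parse tree). -/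
def contractions : Prog → ℕ
  | .leaf _ => 0
  | .seq _ b => 1 + contractions b
  | .ifThen _ a t => 1 + contractions a + contractions t
  | .ite _ a b t => 1 + contractions a + contractions b + contractions t
  | .pcase _ bs t => 1 + (bs.attach.map (fun p => contractions p.1)).sum + contractions t
  | .whileP _ a t => 1 + contractions a + contractions t
  | .repeatP _ a t => 1 + contractions a + contractions t
  termination_by P => sizeOf P
  decreasing_by all_goals
    first
      | (have := List.sizeOf_lt_of_mem p.2; simp +arith +decide at this ⊢; omega)
      | (simp +arith +decide)
      | (simp +arith +decide; omega)


/-- The Dijkstra graph represented by a structured program. -/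
def graphOf : Prog → SSG
  | .leaf v => trivG v
  | .seq v b =>
      let B := graphOf b
      ⟨insert v B.verts, insert (v, B.src) B.edges, v, B.snk⟩
  | .ifThen v a t =>
      let A := graphOf a; let T := graphOf t
      ⟨insert v (A.verts ∪ T.verts),
       ({(v, A.src), (A.snk, T.src), (v, T.src)} : Finset (ℕ × ℕ)) ∪ A.edges ∪ T.edges,
       v, T.snk⟩
  | .ite v a b t =>
      let A := graphOf a; let B := graphOf b; let T := graphOf t
      ⟨insert v (A.verts ∪ B.verts ∪ T.verts),
       ({(v, A.src), (v, B.src), (A.snk, T.src), (B.snk, T.src)} : Finset (ℕ × ℕ)) ∪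
         A.edges ∪ B.edges ∪ T.edges, v, T.snk⟩
  | .pcase v bs t =>
      let T := graphOf t
      ⟨insert v ((bs.attach.map (fun p => (graphOf p.1).verts)).foldr (· ∪ ·) ∅ ∪ T.verts),
       (bs.attach.map (fun p =>
          let A := graphOf p.1
          insert (v, A.src) (insert (A.snk, T.src) A.edges))).foldr (· ∪ ·) ∅ ∪ T.edges,
       v, T.snk⟩
  | .whileP v a t =>
      let A := graphOf a; let T := graphOf t
      ⟨insert v (A.verts ∪ T.verts),
       ({(v, A.src), (A.snk, v), (v, T.src)} : Finset (ℕ × ℕ)) ∪ A.edges ∪ T.edges,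
       v, T.snk⟩
  | .repeatP v a t =>
      let A := graphOf a; let T := graphOf t
      ⟨insert v (A.verts ∪ T.verts),
       ({(v, A.src), (A.snk, v), (A.snk, T.src)} : Finset (ℕ × ℕ)) ∪ A.edges ∪ T.edges,
       v, T.snk⟩
  termination_by P => sizeOf P
  decreasing_by all_goals
    first
      | (have := List.sizeOf_lt_of_mem p.2; simp +arith +decide at this ⊢; omega)
      | (simp +arith +decide)
      | (simp +arith +decide; omega)

/-- Every `pcase` node has at least 3 branches. -/
def arityOK : Prog → Prop
  | .leaf _ => True
  | .seq _ b => arityOK b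
  | .ifThen _ a t => arityOK a ∧ arityOK t
  | .ite _ a b t => arityOK a ∧ arityOK b ∧ arityOK t
  | .pcase _ bs t => 3 ≤ bs.length ∧ (∀ p ∈ bs.attach, arityOK p.1) ∧ arityOK t
  | .whileP _ a t => arityOK a ∧ arityOK t
  | .repeatP _ a t => arityOK a ∧ arityOK t
  termination_by P => sizeOf P
  decreasing_by all_goals
    first
      | (have := List.sizeOf_lt_of_mem p.2; simp +arith +decide at this ⊢; omega)
      | (simp +arith +decide)
      | (simp +arith +decide; omega)

/-- Well-formed program: all vertex names distinct, correct `pcase` arities. -/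
def WF (P : Prog) : Prop := (vlist P).Nodup ∧ arityOK P

/-- The directed path on `n` vertices `0 → 1 → ⋯ → n-1`. -/
def pathG (n : ℕ) : SSG :=
  ⟨Finset.range n, (Finset.range (n - 1)).image (fun i => (i, i + 1)), 0, n - 1⟩

end DJ

namespace DJ

def pm (l l' : List ℕ) (v : ℕ) : ℕ := l'.getD (l.idxOf v) 0

def mapG (f : ℕ → ℕ) (G : SSG) : SSG :=
  ⟨G.verts.image f, G.edges.image fun e => (f e.1, f e.2), f G.src, f G.snk⟩

lemma code_head : ∀ P : Prog, ∃ r, code P = 1 :: r := by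
  intro P; cases P <;> simp [code]

def tag : Prog → ℕ
  | .leaf _ => 0
  | .seq _ _ => 2
  | .ifThen _ _ _ => 3
  | .ite _ _ _ _ => 6
  | .pcase _ bs _ => bs.length + 4
  | .whileP _ _ _ => 4
  | .repeatP _ _ _ => 5

lemma code_getD_one : ∀ P : Prog, (code P).getD 1 0 = tag P := by
  intro P; cases P <;> simp [code, tag]
/-! ### code inversion: the second symbol determines the constructor -/

lemma tag_eq_of_code_eq {P P' : Prog} (h : code P = code P') : tag P = tag P' := by
  rw [← code_getD_one, ← code_getD_one, h]

lemma code_inv_leaf {P' : Prog} (h : code P' = [1]) : ∃ v', P' = .leaf v' := by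
  cases P' <;> simp [code] at h ⊢

lemma code_inv_seq {P' : Prog} {c : List ℕ} (h : code P' = 1 :: 2 :: c) :
    ∃ v' b', P' = .seq v' b' ∧ code b' = c := by
  cases P' <;> simp [code] at h <;> try (exfalso; omega)
  exact ⟨_, _, rfl, h⟩

lemma code_inv_ifThen {P' : Prog} {c : List ℕ} (h : code P' = 1 :: 3 :: c) :
    ∃ v' a' t', P' = .ifThen v' a' t' ∧ code a' ++ code t' = c := by
  cases P' <;> simp [code] at h <;> try (exfalso; omega)
  exact ⟨_, _, _, rfl, h⟩

lemma code_inv_while {P' : Prog} {c : List ℕ} (h' : arityOK P') (h : code P' = 1 :: 4 :: c) :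
    ∃ v' a' t', P' = .whileP v' a' t' ∧ code a' ++ code t' = c := by
  cases P' <;> simp [code, arityOK] at h h' <;> try (exfalso; omega)
  · have := h.1; have := h'.1; simp_all
  · exact ⟨_, _, _, rfl, h⟩

lemma code_inv_repeat {P' : Prog} {c : List ℕ} (h' : arityOK P') (h : code P' = 1 :: 5 :: c) :
    ∃ v' a' t', P' = .repeatP v' a' t' ∧ code a' ++ code t' = c := by
  cases P' <;> simp [code, arityOK] at h h' <;> try (exfalso; omega)
  exact ⟨_, _, _, rfl, h⟩

lemma code_inv_ite {P' : Prog} {c : List ℕ} (h' : arityOK P') (h : code P' = 1 :: 6 :: c) :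
    ∃ v' a' b' t', P' = .ite v' a' b' t' ∧
      (if lexLe (code a') (code b') then code a' ++ code b'
        else code b' ++ code a') ++ code t' = c := by
  cases P' <;> simp [code, arityOK] at h h' <;> try (exfalso; omega)
  exact ⟨_, _, _, _, rfl, h⟩

lemma code_inv_pcase {P' : Prog} {n : ℕ} {c : List ℕ} (hn : 3 ≤ n)
    (h : code P' = 1 :: (n + 4) :: c) :
    ∃ v' bs' t', P' = .pcase v' bs' t' ∧ bs'.length = n ∧
      ((bs'.attach.map (fun p => code p.1)).mergeSort (fun x y => lexLe x y)).flatten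
        ++ code t' = c := by
  cases P' <;> simp [code] at h <;> try (exfalso; omega)
  refine ⟨_, _, _, rfl, by omega, ?_⟩
  rw [List.attach_map_val]
  exact h.2
/-! ### unique decodability of codes -/

def arity (t : ℕ) : ℕ := if t ≤ 2 then 1 else if t ≤ 5 then 2 else t - 3

def OkT (s : List ℕ) : Prop := s = [] ∨ ∃ r, s = 1 :: r

lemma okT_code (P : Prog) : OkT (code P) := .inr (code_head P)

lemma okT_flatten_append {cs : List (List ℕ)} {s : List ℕ}
    (hcs : ∀ c ∈ cs, ∃ r, c = 1 :: r) (hs : OkT s) : OkT (cs.flatten ++ s) := by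
  cases cs with
  | nil => simpa using hs
  | cons c cs =>
    obtain ⟨r, hr⟩ := hcs c (by simp)
    exact .inr ⟨r ++ (cs.flatten ++ s), by simp [hr]⟩

def Splits (c : List ℕ) : Prop :=
  ∀ Q : Prog, arityOK Q → ∀ s s', OkT s → OkT s' → c ++ s = code Q ++ s' →
    c = code Q ∧ s = s'

lemma code_shape (P : Prog) (hP : arityOK P) :
    code P = [1] ∨ ∃ (t : ℕ) (cs : List (List ℕ)), code P = 1 :: t :: cs.flatten ∧ 2 ≤ t ∧ cs.length = arity t ∧
      ∀ c ∈ cs, ∃ Q, sizeOf Q < sizeOf P ∧ arityOK Q ∧ code Q = c := by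
  cases P with
  | leaf v => left; simp [code]
  | seq v b =>
    right
    refine ⟨2, [code b], by simp [code], by norm_num, by simp [arity], ?_⟩
    intro c hc; simp at hc; subst hc
    exact ⟨b, by simp +arith +decide, by simpa [arityOK] using hP, rfl⟩
  | ifThen v a t =>
    right
    simp [arityOK] at hP
    refine ⟨3, [code a, code t], by simp [code], by norm_num, by simp [arity], ?_⟩
    intro c hc; simp at hc
    rcases hc with rfl | rfl
    · exact ⟨a, by simp +arith +decide, hP.1, rfl⟩
    · exact ⟨t, by simp +arith +decide, hP.2, rfl⟩
  | whileP v a t =>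
    right
    simp [arityOK] at hP
    refine ⟨4, [code a, code t], by simp [code], by norm_num, by simp [arity], ?_⟩
    intro c hc; simp at hc
    rcases hc with rfl | rfl
    · exact ⟨a, by simp +arith +decide, hP.1, rfl⟩
    · exact ⟨t, by simp +arith +decide, hP.2, rfl⟩
  | repeatP v a t =>
    right
    simp [arityOK] at hP
    refine ⟨5, [code a, code t], by simp [code], by norm_num, by simp [arity], ?_⟩
    intro c hc; simp at hc
    rcases hc with rfl | rfl
    · exact ⟨a, by simp +arith +decide, hP.1, rfl⟩
    · exact ⟨t, by simp +arith +decide, hP.2, rfl⟩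
  | ite v a b t =>
    right
    simp [arityOK] at hP
    by_cases hab : lexLe (code a) (code b)
    · refine ⟨6, [code a, code b, code t], by simp [code, hab], by norm_num,
        by simp [arity], ?_⟩
      intro c hc; simp at hc
      rcases hc with rfl | rfl | rfl
      · exact ⟨a, by simp +arith +decide, hP.1, rfl⟩
      · exact ⟨b, by simp +arith +decide, hP.2.1, rfl⟩
      · exact ⟨t, by simp +arith +decide, hP.2.2, rfl⟩
    · refine ⟨6, [code b, code a, code t], by simp [code, hab], by norm_num,
        by simp [arity], ?_⟩
      intro c hc; simp at hc
      rcases hc with rfl | rfl | rfl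
      · exact ⟨b, by simp +arith +decide, hP.2.1, rfl⟩
      · exact ⟨a, by simp +arith +decide, hP.1, rfl⟩
      · exact ⟨t, by simp +arith +decide, hP.2.2, rfl⟩
  | pcase v bs t =>
    right
    simp [arityOK] at hP
    obtain ⟨h3, hbs, ht⟩ := hP
    refine ⟨bs.length + 4,
      (bs.mergeSort (fun x y => lexLe (code x) (code y))).map code ++ [code t], ?_, by omega,
      by simp [arity]; omega, ?_⟩
    · have hms : ((bs.mergeSort (fun x y => lexLe (code x) (code y))).map code)
          = (bs.map code).mergeSort (fun x y => lexLe x y) :=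
        List.map_mergeSort (fun a _ b _ => rfl)
      simp [code, List.attach_map_val, List.flatten_append, hms]
    · intro c hc
      simp at hc
      rcases hc with ⟨q, hq, rfl⟩ | rfl
      · have hq' : q ∈ bs := by simpa using hq
        have h1 : sizeOf q < sizeOf bs := List.sizeOf_lt_of_mem hq'
        exact ⟨q, by simp +arith +decide; omega, hbs q hq', rfl⟩
      · exact ⟨t, by simp +arith +decide, ht, rfl⟩

lemma flatten_split : ∀ (cs cs' : List (List ℕ)),
    (∀ c ∈ cs, Splits c ∧ ∃ r, c = 1 :: r) →
    (∀ c ∈ cs', ∃ Q, arityOK Q ∧ code Q = c) →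
    cs.length = cs'.length → ∀ s s', OkT s → OkT s' →
    cs.flatten ++ s = cs'.flatten ++ s' → cs = cs' ∧ s = s' := by
  intro cs
  induction cs with
  | nil =>
    intro cs' _ _ hlen s s' _ _ heq
    cases cs' with
    | nil => simpa using heq
    | cons c cs' => simp at hlen
  | cons c cs ih =>
    intro cs' hcs hcs' hlen s s' hs hs' heq
    cases cs' with
    | nil => simp at hlen
    | cons c' cs2 =>
      obtain ⟨Q', hQ'ok, hQ'⟩ := hcs' c' (by simp)
      have hsp := (hcs c (by simp)).1
      have h1 : c ++ (cs.flatten ++ s) = code Q' ++ (cs2.flatten ++ s') := by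
        rw [hQ']; simpa [List.append_assoc] using heq
      have hok1 : OkT (cs.flatten ++ s) :=
        okT_flatten_append (fun x hx => (hcs x (by simp [hx])).2) hs
      have hok2 : OkT (cs2.flatten ++ s') := by
        refine okT_flatten_append (fun x hx => ?_) hs'
        obtain ⟨Q, _, hQ⟩ := hcs' x (by simp [hx])
        exact hQ ▸ code_head Q
      obtain ⟨hcq, hrest⟩ := hsp Q' hQ'ok _ _ hok1 hok2 h1
      obtain ⟨h2, h3⟩ := ih cs2 (fun x hx => hcs x (by simp [hx]))
        (fun x hx => hcs' x (by simp [hx])) (by simpa using hlen) s s' hs hs' hrest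
      exact ⟨by rw [h2, hcq, hQ'], h3⟩

theorem splits_code : ∀ (n : ℕ) (P : Prog), sizeOf P < n → arityOK P → Splits (code P) := by
  intro n
  induction n with
  | zero => intro P h; omega
  | succ n ih =>
    intro P hP hOK Q hQOK s s' hs hs' heq
    rcases code_shape P hOK with h1 | ⟨t, cs, hcode, ht, hlen, hmem⟩
    · rcases code_shape Q hQOK with h1' | ⟨t', cs', hcode', ht', hlen', hmem'⟩
      · rw [h1, h1']; rw [h1, h1'] at heq; simpa using heq
      · rw [h1, hcode'] at heq
        simp at heq
        rcases hs with rfl | ⟨r, rfl⟩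
        · simp at heq
        · exfalso; injection heq with h1 _; omega
    · rcases code_shape Q hQOK with h1' | ⟨t', cs', hcode', ht', hlen', hmem'⟩
      · rw [hcode, h1'] at heq
        simp at heq
        rcases hs' with rfl | ⟨r, rfl⟩
        · simp at heq
        · exfalso; injection heq with h1 _; omega
      · rw [hcode, hcode'] at heq
        simp at heq
        obtain ⟨rfl, heq2⟩ := heq
        have hl : cs.length = cs'.length := by rw [hlen, hlen']
        obtain ⟨hcs, hss⟩ := flatten_split cs cs'
          (fun c hc => by
            obtain ⟨Q2, hsz, hok2, hcq⟩ := hmem c hc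
            exact ⟨hcq ▸ ih Q2 (by omega) hok2, hcq ▸ code_head Q2⟩)
          (fun c hc => by
            obtain ⟨Q2, _, hok2, hcq⟩ := hmem' c hc
            exact ⟨Q2, hok2, hcq⟩)
          hl s s' hs hs' heq2
        exact ⟨by rw [hcode, hcode', hcs], hss⟩

lemma splits_of (P : Prog) (h : arityOK P) : Splits (code P) :=
  splits_code (sizeOf P + 1) P (by omega) h
/-!  foldr-union toolkit -/

lemma mem_foldr_union {α : Type*} [DecidableEq α] {x : α} :
    ∀ {l : List (Finset α)}, x ∈ l.foldr (· ∪ ·) ∅ ↔ ∃ s ∈ l, x ∈ s := by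
  intro l
  induction l with
  | nil => simp
  | cons s l ih => simp [ih]

lemma foldr_union_perm {α : Type*} [DecidableEq α] {l l' : List (Finset α)} (h : l.Perm l') :
    l.foldr (· ∪ ·) ∅ = l'.foldr (· ∪ ·) ∅ := by
  induction h with
  | nil => rfl
  | cons x _ ih => simp [List.foldr_cons, ih]
  | swap x y l => simp [List.foldr_cons, Finset.union_left_comm]
  | trans _ _ ih1 ih2 => rw [ih1, ih2]

lemma image_foldr_union {α β : Type*} [DecidableEq α] [DecidableEq β] (f : α → β) :
    ∀ (l : List (Finset α)),
      (l.foldr (· ∪ ·) ∅).image f = (l.map (fun s => s.image f)).foldr (· ∪ ·) ∅ := by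
  intro l
  induction l with
  | nil => simp
  | cons s l ih => simp [Finset.image_union, ih]

lemma toFinset_flatMap {α β : Type*} [DecidableEq β] (g : α → List β) (l : List α) :
    (l.flatMap g).toFinset = (l.map (fun x => (g x).toFinset)).foldr (· ∪ ·) ∅ := by
  induction l with
  | nil => simp
  | cons x l ih => simp [List.flatMap_cons, ih]

/-!  normalized pcase forms -/

def sortProgs (bs : List Prog) : List Prog :=
  bs.mergeSort (fun x y => lexLe (code x) (code y))

lemma sortProgs_perm (bs : List Prog) : (sortProgs bs).Perm bs :=
  List.mergeSort_perm bs _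

lemma vlist_pcase (v : ℕ) (bs : List Prog) (t : Prog) :
    vlist (.pcase v bs t) = v :: ((sortProgs bs).flatMap vlist ++ vlist t) := by
  have hms : ((sortProgs bs).map (fun q => (code q, vlist q)))
      = (bs.map (fun q => (code q, vlist q))).mergeSort (fun x y => lexLe x.1 y.1) :=
    List.map_mergeSort (fun a _ b _ => rfl)
  rw [vlist]
  rw [show (bs.attach.map (fun p => (code p.1, vlist p.1)))
      = bs.map (fun q => (code q, vlist q)) from List.attach_map_val (l := bs) (f := fun q => (code q, vlist q))]
  rw [← hms]
  congr 1
  rw [List.flatMap_map]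

lemma code_pcase (v : ℕ) (bs : List Prog) (t : Prog) :
    code (.pcase v bs t) = 1 :: (bs.length + 4) :: ((sortProgs bs).flatMap code ++ code t) := by
  have hms : ((sortProgs bs).map code) = (bs.map code).mergeSort (fun x y => lexLe x y) :=
    List.map_mergeSort (fun a _ b _ => rfl)
  rw [code]
  rw [show (bs.attach.map (fun p => code p.1)) = bs.map code from List.attach_map_val (l := bs) (f := code)]
  rw [← hms, List.flatMap]

lemma graphOf_pcase_perm {bs bs' : List Prog} (v : ℕ) (t : Prog) (h : bs.Perm bs') :
    graphOf (.pcase v bs t) = graphOf (.pcase v bs' t) := by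
  rw [graphOf, graphOf]
  rw [SSG.mk.injEq]
  rw [show (bs.attach.map (fun p => (graphOf p.1).verts))
      = bs.map (fun q => (graphOf q).verts) from List.attach_map_val (l := bs) (f := fun q => (graphOf q).verts)]
  rw [show (bs'.attach.map (fun p => (graphOf p.1).verts))
      = bs'.map (fun q => (graphOf q).verts) from List.attach_map_val (l := bs') (f := fun q => (graphOf q).verts)]
  rw [show (bs.attach.map (fun p =>
        insert (v, (graphOf p.1).src) (insert ((graphOf p.1).snk, (graphOf t).src)
          (graphOf p.1).edges)))
      = bs.map (fun q => insert (v, (graphOf q).src) (insert ((graphOf q).snk,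
          (graphOf t).src) (graphOf q).edges)) from List.attach_map_val (l := bs)
        (f := fun q => insert (v, (graphOf q).src) (insert ((graphOf q).snk, (graphOf t).src) (graphOf q).edges))]
  rw [show (bs'.attach.map (fun p =>
        insert (v, (graphOf p.1).src) (insert ((graphOf p.1).snk, (graphOf t).src)
          (graphOf p.1).edges)))
      = bs'.map (fun q => insert (v, (graphOf q).src) (insert ((graphOf q).snk,
          (graphOf t).src) (graphOf q).edges)) from List.attach_map_val (l := bs')
        (f := fun q => insert (v, (graphOf q).src) (insert ((graphOf q).snk, (graphOf t).src) (graphOf q).edges))]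
  exact ⟨by rw [foldr_union_perm (h.map _)], by rw [foldr_union_perm (h.map _)], rfl, rfl⟩

lemma graphOf_pcase_sort (v : ℕ) (bs : List Prog) (t : Prog) :
    graphOf (.pcase v bs t) = graphOf (.pcase v (sortProgs bs) t) :=
  graphOf_pcase_perm v t (sortProgs_perm bs).symm

/-!  vertices of graphOf -/

lemma vlist_src : ∀ P : Prog, ∃ r, vlist P = (graphOf P).src :: r := by
  intro P
  cases P <;> (simp only [vlist, graphOf, trivG]; exact ⟨_, rfl⟩)

lemma verts_toFinset : ∀ (n : ℕ) (P : Prog), sizeOf P < n →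
    (graphOf P).verts = (vlist P).toFinset := by
  intro n
  induction n with
  | zero => intro P h; omega
  | succ n ih =>
    intro P hn
    cases P with
    | leaf v => simp [graphOf, vlist, trivG]
    | seq v b =>
      have := ih b (by simp +arith +decide at hn ⊢; omega)
      simp [graphOf, vlist, this]
    | ifThen v a t =>
      have ha := ih a (by simp +arith +decide at hn ⊢; omega)
      have ht := ih t (by simp +arith +decide at hn ⊢; omega)
      simp [graphOf, vlist, ha, ht]
    | whileP v a t =>
      have ha := ih a (by simp +arith +decide at hn ⊢; omega)
      have ht := ih t (by simp +arith +decide at hn ⊢; omega)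
      simp [graphOf, vlist, ha, ht]
    | repeatP v a t =>
      have ha := ih a (by simp +arith +decide at hn ⊢; omega)
      have ht := ih t (by simp +arith +decide at hn ⊢; omega)
      simp [graphOf, vlist, ha, ht]
    | ite v a b t =>
      have ha := ih a (by simp +arith +decide at hn ⊢; omega)
      have hb := ih b (by simp +arith +decide at hn ⊢; omega)
      have ht := ih t (by simp +arith +decide at hn ⊢; omega)
      by_cases hab : lexLe (code a) (code b) <;>
        simp [graphOf, vlist, ha, hb, ht, hab, Finset.union_assoc,
          Finset.union_left_comm, Finset.union_comm]
    | pcase v bs t =>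
      have hsz : ∀ q ∈ sortProgs bs, sizeOf q < n := by
        intro q hq
        have : q ∈ bs := (sortProgs_perm bs).subset hq
        have := List.sizeOf_lt_of_mem this
        simp +arith +decide at hn; omega
      have ht := ih t (by simp +arith +decide at hn ⊢; omega)
      rw [graphOf_pcase_sort, vlist_pcase, graphOf]
      rw [show ((sortProgs bs).attach.map (fun p => (graphOf p.1).verts))
          = (sortProgs bs).map (fun q => (graphOf q).verts) from
          List.attach_map_val (l := (sortProgs bs)) (f := fun q => (graphOf q).verts)]
      simp only [List.toFinset_cons, List.toFinset_append, toFinset_flatMap]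
      rw [ht]
      rw [List.map_congr_left (fun q hq => ih q (hsz q hq))]

lemma src_mem (P : Prog) : (graphOf P).src ∈ (graphOf P).verts := by
  obtain ⟨r, hr⟩ := vlist_src P
  rw [verts_toFinset (sizeOf P + 1) P (by omega), hr]
  simp

lemma snk_mem : ∀ (n : ℕ) (P : Prog), sizeOf P < n → (graphOf P).snk ∈ (graphOf P).verts := by
  intro n
  induction n with
  | zero => intro P h; omega
  | succ n ih =>
    intro P hn
    cases P with
    | leaf v => simp [graphOf, trivG]
    | seq v b =>
      have := ih b (by simp +arith +decide at hn ⊢; omega)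
      simp [graphOf]; tauto
    | ifThen v a t =>
      have := ih t (by simp +arith +decide at hn ⊢; omega)
      simp [graphOf]; tauto
    | whileP v a t =>
      have := ih t (by simp +arith +decide at hn ⊢; omega)
      simp [graphOf]; tauto
    | repeatP v a t =>
      have := ih t (by simp +arith +decide at hn ⊢; omega)
      simp [graphOf]; tauto
    | ite v a b t =>
      have := ih t (by simp +arith +decide at hn ⊢; omega)
      simp [graphOf]; tauto
    | pcase v bs t =>
      have := ih t (by simp +arith +decide at hn ⊢; omega)
      simp [graphOf]; tauto

lemma snk_mem' (P : Prog) : (graphOf P).snk ∈ (graphOf P).verts :=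
  snk_mem (sizeOf P + 1) P (by omega)

lemma edge_mem : ∀ (n : ℕ) (P : Prog), sizeOf P < n →
    ∀ e ∈ (graphOf P).edges, e.1 ∈ (graphOf P).verts ∧ e.2 ∈ (graphOf P).verts := by
  intro n
  induction n with
  | zero => intro P h; omega
  | succ n ih =>
    intro P hn e he
    cases P with
    | leaf v => simp [graphOf, trivG] at he
    | seq v b =>
      have hb := ih b (by simp +arith +decide at hn ⊢; omega)
      simp [graphOf] at he ⊢
      rcases he with he | he
      · simp [he, src_mem b]
      · have := hb e he; tauto
    | ifThen v a t =>
      have ha := ih a (by simp +arith +decide at hn ⊢; omega)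
      have ht := ih t (by simp +arith +decide at hn ⊢; omega)
      simp [graphOf] at he ⊢
      rcases he with he | he | he | he | he
      · simp [he, src_mem a]
      · simp [he, src_mem t, snk_mem' a]
      · simp [he, src_mem t]
      · have := ha e he; tauto
      · have := ht e he; tauto
    | whileP v a t =>
      have ha := ih a (by simp +arith +decide at hn ⊢; omega)
      have ht := ih t (by simp +arith +decide at hn ⊢; omega)
      simp [graphOf] at he ⊢
      rcases he with he | he | he | he | he
      · simp [he, src_mem a]
      · simp [he, snk_mem' a]
      · simp [he, src_mem t]
      · have := ha e he; tauto
      · have := ht e he; tauto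
    | repeatP v a t =>
      have ha := ih a (by simp +arith +decide at hn ⊢; omega)
      have ht := ih t (by simp +arith +decide at hn ⊢; omega)
      simp [graphOf] at he ⊢
      rcases he with he | he | he | he | he
      · simp [he, src_mem a]
      · simp [he, snk_mem' a]
      · simp [he, src_mem t, snk_mem' a]
      · have := ha e he; tauto
      · have := ht e he; tauto
    | ite v a b t =>
      have ha := ih a (by simp +arith +decide at hn ⊢; omega)
      have hb := ih b (by simp +arith +decide at hn ⊢; omega)
      have ht := ih t (by simp +arith +decide at hn ⊢; omega)
      simp [graphOf] at he ⊢
      rcases he with he | he | he | he | he | he | he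
      · simp [he, src_mem a]
      · simp [he, src_mem b]
      · simp [he, src_mem t, snk_mem' a]
      · simp [he, src_mem t, snk_mem' b]
      · have := ha e he; tauto
      · have := hb e he; tauto
      · have := ht e he; tauto
    | pcase v bs t =>
      have ht := ih t (by simp +arith +decide at hn ⊢; omega)
      simp only [graphOf, Finset.mem_union] at he
      rcases he with he | he
      · rw [show (bs.attach.map (fun p =>
            insert (v, (graphOf p.1).src) (insert ((graphOf p.1).snk, (graphOf t).src)
              (graphOf p.1).edges)))
          = bs.map (fun q => insert (v, (graphOf q).src) (insert ((graphOf q).snk,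
              (graphOf t).src) (graphOf q).edges)) from List.attach_map_val (l := bs)
        (f := fun q => insert (v, (graphOf q).src) (insert ((graphOf q).snk, (graphOf t).src) (graphOf q).edges))] at he
        rw [mem_foldr_union] at he
        obtain ⟨s, hs, hes⟩ := he
        simp only [List.mem_map] at hs
        obtain ⟨q, hq, rfl⟩ := hs
        have hqn : sizeOf q < n := by
          have := List.sizeOf_lt_of_mem hq
          simp +arith +decide at hn; omega
        have hqv : (graphOf q).verts ⊆ (graphOf (.pcase v bs t)).verts := by
          intro x hx
          simp only [graphOf, Finset.mem_insert, Finset.mem_union]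
          right; left
          rw [show (bs.attach.map (fun p => (graphOf p.1).verts))
              = bs.map (fun q => (graphOf q).verts) from List.attach_map_val (l := bs) (f := fun q => (graphOf q).verts)]
          rw [mem_foldr_union]
          exact ⟨(graphOf q).verts, List.mem_map_of_mem hq, hx⟩
        have htv : (graphOf t).verts ⊆ (graphOf (.pcase v bs t)).verts := by
          intro x hx
          simp only [graphOf, Finset.mem_insert, Finset.mem_union]
          tauto
        have hv : v ∈ (graphOf (.pcase v bs t)).verts := by
          simp [graphOf]
        simp only [Finset.mem_insert] at hes
        rcases hes with hes | hes | hes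
        · rw [hes]; exact ⟨hv, hqv (src_mem q)⟩
        · rw [hes]; exact ⟨hqv (snk_mem' q), htv (src_mem t)⟩
        · have := ih q hqn e hes
          exact ⟨hqv this.1, hqv this.2⟩
      · have := ht e he
        have htv : (graphOf t).verts ⊆ (graphOf (.pcase v bs t)).verts := by
          intro x hx
          simp only [graphOf, Finset.mem_insert, Finset.mem_union]
          tauto
        exact ⟨htv this.1, htv this.2⟩

lemma edge_mem' (P : Prog) : ∀ e ∈ (graphOf P).edges,
    e.1 ∈ (graphOf P).verts ∧ e.2 ∈ (graphOf P).verts :=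
  edge_mem (sizeOf P + 1) P (by omega)

lemma verts_eq (P : Prog) : (graphOf P).verts = (vlist P).toFinset :=
  verts_toFinset (sizeOf P + 1) P (by omega)
/-! ### the positional map -/

lemma pm_head (v v' : ℕ) (r r' : List ℕ) : pm (v :: r) (v' :: r') v = v' := by
  simp [pm, List.idxOf_cons_self]

lemma pm_middle {pre mid post pre' mid' post' : List ℕ}
    (hnd : (pre ++ (mid ++ post)).Nodup) (hp : pre.length = pre'.length)
    (hm : mid.length = mid'.length) {v : ℕ} (hv : v ∈ mid) :
    pm (pre ++ (mid ++ post)) (pre' ++ (mid' ++ post')) v = pm mid mid' v := by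
  unfold pm
  have hvp : v ∉ pre := by
    intro hvp
    exact (List.nodup_append.1 hnd).2.2 v hvp v (by simp [hv]) rfl
  have hvm : v ∉ post := by
    have h2 := (List.nodup_append.1 (List.nodup_append.1 hnd).2.1).2.2
    intro hc; exact h2 v hv v hc rfl
  rw [List.idxOf_append_of_notMem hvp, List.idxOf_append_of_mem hv]
  have hi : List.idxOf v mid < mid.length := List.idxOf_lt_length_iff.2 hv
  rw [List.getD_append_right pre' _ _ _ (by omega)]
  have : pre.length + List.idxOf v mid - pre'.length = List.idxOf v mid := by omega
  rw [this, List.getD_append _ _ _ _ (by omega)]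

lemma pm_inj {l l' : List ℕ} (hnd : l.Nodup) (hnd' : l'.Nodup) (hlen : l.length = l'.length)
    {x y : ℕ} (hx : x ∈ l) (hy : y ∈ l) (h : pm l l' x = pm l l' y) : x = y := by
  have hix : l.idxOf x < l.length := List.idxOf_lt_length_iff.2 hx
  have hiy : l.idxOf y < l.length := List.idxOf_lt_length_iff.2 hy
  unfold pm at h
  have hx' : l'.getD (l.idxOf x) 0 = l'[l.idxOf x]'(by omega) := List.getD_eq_getElem _ _ _
  have hy' : l'.getD (l.idxOf y) 0 = l'[l.idxOf y]'(by omega) := List.getD_eq_getElem _ _ _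
  rw [hx', hy'] at h
  have hxy : l.idxOf x = l.idxOf y := by
    have := List.nodup_iff_injective_getElem.1 hnd'
      (a₁ := ⟨l.idxOf x, by omega⟩) (a₂ := ⟨l.idxOf y, by omega⟩) h
    simpa using congrArg Fin.val this
  calc x = l[l.idxOf x]'hix := (List.getElem_idxOf hix).symm
    _ = l[l.idxOf y]'hiy := by simp only [hxy]
    _ = y := List.getElem_idxOf hiy

/-! ### mapped graphs -/

lemma mapG_congr {f g : ℕ → ℕ} {G : SSG} (h : ∀ x ∈ G.verts, f x = g x)
    (hE : ∀ e ∈ G.edges, e.1 ∈ G.verts ∧ e.2 ∈ G.verts)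
    (hs : G.src ∈ G.verts) (ht : G.snk ∈ G.verts) : mapG f G = mapG g G := by
  unfold mapG
  rw [SSG.mk.injEq]
  refine ⟨Finset.image_congr (fun x hx => h x hx), Finset.image_congr (fun e he => ?_),
    h _ hs, h _ ht⟩
  obtain ⟨h1, h2⟩ := hE e he
  rw [h _ h1, h _ h2]

def Concl (P P' : Prog) : Prop :=
  (vlist P).length = (vlist P').length ∧
    graphOf P' = mapG (pm (vlist P) (vlist P')) (graphOf P)

lemma nodup_flatMap {α β : Type*} {g : α → List β} {l : List α}
    (h : (l.flatMap g).Nodup) : ∀ x ∈ l, (g x).Nodup := by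
  induction l with
  | nil => simp
  | cons a l ih =>
    rw [List.flatMap_cons, List.nodup_append] at h
    intro x hx
    rcases List.mem_cons.1 hx with rfl | hx
    · exact h.1
    · exact ih h.2.1 x hx

lemma comps (L L' : List ℕ) (hnd : L.Nodup) :
    ∀ (qs qs' : List Prog) (pre pre' post post' : List ℕ),
      (∀ q ∈ qs, ∀ q' : Prog, WF q → WF q' → code q = code q' → Concl q q') →
      List.Forall₂ (fun q q' => code q = code q') qs qs' →
      (∀ q ∈ qs, WF q) → (∀ q' ∈ qs', WF q') →
      L = pre ++ (qs.flatMap vlist ++ post) →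
      L' = pre' ++ (qs'.flatMap vlist ++ post') →
      pre.length = pre'.length →
      List.Forall₂ (fun q q' => (vlist q).length = (vlist q').length ∧
        graphOf q' = mapG (pm L L') (graphOf q)) qs qs' := by
  intro qs
  induction qs with
  | nil =>
    intro qs' _ _ _ _ _ hf _ _ _ _ _
    cases hf; exact .nil
  | cons q qs ih =>
    intro qs' pre pre' post post' hIH hf hwq hwq' hL hL' hp
    cases hf with
    | cons hcode hf' =>
      rename_i q' qs''
      obtain ⟨hlen, hg⟩ := hIH q (by simp) q' (hwq q (by simp)) (hwq' q' (by simp)) hcode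
      have hL2 : L = pre ++ (vlist q ++ (qs.flatMap vlist ++ post)) := by
        rw [hL]; simp [List.append_assoc]
      have hL2' : L' = pre' ++ (vlist q' ++ (qs''.flatMap vlist ++ post')) := by
        rw [hL']; simp [List.append_assoc]
      have hagree : ∀ x ∈ (graphOf q).verts, pm L L' x = pm (vlist q) (vlist q') x := by
        intro x hx
        rw [verts_eq, List.mem_toFinset] at hx
        rw [hL2, hL2']
        exact pm_middle (hL2 ▸ hnd) hp hlen hx
      have hg' : graphOf q' = mapG (pm L L') (graphOf q) := by
        rw [hg]
        exact (mapG_congr hagree (edge_mem' q) (src_mem q) (snk_mem' q)).symm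
      refine .cons ⟨hlen, hg'⟩ (ih qs'' (pre ++ vlist q) (pre' ++ vlist q') post post'
        (fun x hx => hIH x (by simp [hx])) hf' (fun x hx => hwq x (by simp [hx]))
        (fun x hx => hwq' x (by simp [hx])) (by rw [hL2]; simp)
        (by rw [hL2']; simp) (by simp [hp, hlen]))

lemma forall₂_of_map_eq {α β : Type*} {f g : α → β} :
    ∀ {l l' : List α}, l.map f = l'.map g → List.Forall₂ (fun a b => f a = g b) l l' := by
  intro l
  induction l with
  | nil => intro l' h; cases l' <;> simp_all
  | cons a l ih =>
    intro l' h
    cases l' with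
    | nil => simp at h
    | cons b l' =>
      simp only [List.map_cons, List.cons.injEq] at h
      exact .cons h.1 (ih h.2)

lemma forall₂_map_eq {β : Type*} {R : Prog → Prog → Prop} {g h : Prog → β} :
    ∀ {l l' : List Prog}, List.Forall₂ R l l' → (∀ a b, R a b → g b = h a) →
      l'.map g = l.map h := by
  intro l l' hf hgh
  induction hf with
  | nil => rfl
  | cons hr _ ih => simp [ih, hgh _ _ hr]

lemma okT_code_append (P : Prog) (s : List ℕ) : OkT (code P ++ s) := by
  obtain ⟨r, hr⟩ := code_head P
  exact .inr ⟨r ++ s, by simp [hr]⟩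

lemma graphOf_ite_comm (v : ℕ) (a b t : Prog) :
    graphOf (.ite v a b t) = graphOf (.ite v b a t) := by
  rw [graphOf, graphOf, SSG.mk.injEq]
  refine ⟨?_, ?_, rfl, rfl⟩
  · ext x; simp; tauto
  · ext x; simp; tauto
/-! ### gluing lemmas -/

lemma flatMap_len_eq {qs qs' : List Prog}
    (h : List.Forall₂ (fun q q' => (vlist q).length = (vlist q').length) qs qs') :
    (qs.flatMap vlist).length = (qs'.flatMap vlist).length := by
  induction h with
  | nil => rfl
  | cons h _ ih => simp only [List.flatMap_cons, List.length_append, ih, h]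

lemma forall₂_weaken {R S : Prog → Prog → Prop} {qs qs' : List Prog}
    (h : List.Forall₂ R qs qs') (hRS : ∀ a b, R a b → S a b) : List.Forall₂ S qs qs' := by
  induction h with
  | nil => exact .nil
  | cons h _ ih => exact .cons (hRS _ _ h) ih

lemma pcase_glue (v v' : ℕ) (qs qs' : List Prog) (t t' : Prog) (P P' : Prog)
    (hP : graphOf P = graphOf (.pcase v qs t))
    (hP' : graphOf P' = graphOf (.pcase v' qs' t'))
    (hvl : vlist P = v :: (qs.flatMap vlist ++ vlist t))
    (hvl' : vlist P' = v' :: (qs'.flatMap vlist ++ vlist t'))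
    (hnd : (vlist P).Nodup)
    (hwq : ∀ q ∈ qs, WF q) (hwq' : ∀ q ∈ qs', WF q) (hwt : WF t) (hwt' : WF t')
    (hf : List.Forall₂ (fun q q' => code q = code q') qs qs')
    (hct : code t = code t')
    (hIH : ∀ q ∈ qs, ∀ q', WF q → WF q' → code q = code q' → Concl q q')
    (hIHt : ∀ q', WF t → WF q' → code t = code q' → Concl t q') :
    Concl P P' := by
  have hfq := comps (vlist P) (vlist P') hnd qs qs' [v] [v'] (vlist t) (vlist t')
    hIH hf hwq hwq' (by rw [hvl]; simp) (by rw [hvl']; simp) rfl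
  have hflat : (qs.flatMap vlist).length = (qs'.flatMap vlist).length :=
    flatMap_len_eq (forall₂_weaken hfq (fun a b h => h.1))
  have hft := comps (vlist P) (vlist P') hnd [t] [t'] (v :: qs.flatMap vlist)
    (v' :: qs'.flatMap vlist) [] []
    (fun q hq => by rcases List.mem_singleton.1 hq with rfl; exact hIHt)
    (.cons hct .nil) (fun q hq => by rcases List.mem_singleton.1 hq with rfl; exact hwt)
    (fun q hq => by rcases List.mem_singleton.1 hq with rfl; exact hwt')
    (by rw [hvl]; simp) (by rw [hvl']; simp) (by simp [hflat])
  obtain ⟨hlent, hgt⟩ : (vlist t).length = (vlist t').length ∧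
      graphOf t' = mapG (pm (vlist P) (vlist P')) (graphOf t) := by
    cases hft with | cons h _ => exact h
  have hFv : pm (vlist P) (vlist P') v = v' := by
    rw [hvl, hvl']; exact pm_head _ _ _ _
  constructor
  · rw [hvl, hvl']; simp [hflat, hlent]
  · rw [hP, hP', graphOf, graphOf]
    rw [show (qs.attach.map (fun p => (graphOf p.1).verts))
        = qs.map (fun q => (graphOf q).verts) from
        List.attach_map_val (l := qs) (f := fun q => (graphOf q).verts)]
    rw [show (qs'.attach.map (fun p => (graphOf p.1).verts))
        = qs'.map (fun q => (graphOf q).verts) from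
        List.attach_map_val (l := qs') (f := fun q => (graphOf q).verts)]
    rw [show (qs.attach.map (fun p =>
          insert (v, (graphOf p.1).src) (insert ((graphOf p.1).snk, (graphOf t).src)
            (graphOf p.1).edges)))
        = qs.map (fun q => insert (v, (graphOf q).src) (insert ((graphOf q).snk,
            (graphOf t).src) (graphOf q).edges)) from List.attach_map_val (l := qs)
        (f := fun q => insert (v, (graphOf q).src) (insert ((graphOf q).snk, (graphOf t).src) (graphOf q).edges))]
    rw [show (qs'.attach.map (fun p =>
          insert (v', (graphOf p.1).src) (insert ((graphOf p.1).snk, (graphOf t').src)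
            (graphOf p.1).edges)))
        = qs'.map (fun q => insert (v', (graphOf q).src) (insert ((graphOf q).snk,
            (graphOf t').src) (graphOf q).edges)) from List.attach_map_val (l := qs')
        (f := fun q => insert (v', (graphOf q).src) (insert ((graphOf q).snk, (graphOf t').src) (graphOf q).edges))]
    rw [SSG.mk.injEq]
    simp only [mapG]
    refine ⟨?_, ?_, hFv.symm, by rw [hgt]; rfl⟩
    · rw [Finset.image_insert, Finset.image_union, hFv,
        image_foldr_union (pm (vlist P) (vlist P')), List.map_map]
      rw [forall₂_map_eq (forall₂_weaken hfq
          (S := fun a b => graphOf b = mapG (pm (vlist P) (vlist P')) (graphOf a))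
          (fun a b h => h.2))
        (g := fun q => (graphOf q).verts)
        (h := fun q => Finset.image (pm (vlist P) (vlist P')) (graphOf q).verts)
        (fun a b hab => by
          show (graphOf b).verts = Finset.image (pm (vlist P) (vlist P')) (graphOf a).verts
          rw [hab]; rfl)]
      rw [show (graphOf t').verts = Finset.image (pm (vlist P) (vlist P')) (graphOf t).verts
        from by rw [hgt]; rfl]
      rfl
    · rw [Finset.image_union,
        image_foldr_union (fun e : ℕ × ℕ => (pm (vlist P) (vlist P') e.1, pm (vlist P) (vlist P') e.2)),
        List.map_map]
      rw [forall₂_map_eq (forall₂_weaken hfq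
          (S := fun a b => graphOf b = mapG (pm (vlist P) (vlist P')) (graphOf a))
          (fun a b h => h.2))
        (g := fun q => insert (v', (graphOf q).src) (insert ((graphOf q).snk,
          (graphOf t').src) (graphOf q).edges))
        (h := fun q => Finset.image (fun e : ℕ × ℕ => (pm (vlist P) (vlist P') e.1, pm (vlist P) (vlist P') e.2))
          (insert (v, (graphOf q).src) (insert ((graphOf q).snk, (graphOf t).src)
            (graphOf q).edges)))
        (fun a b hab => by
          show insert (v', (graphOf b).src) (insert ((graphOf b).snk, (graphOf t').src)
              (graphOf b).edges)
            = Finset.image (fun e : ℕ × ℕ => (pm (vlist P) (vlist P') e.1, pm (vlist P) (vlist P') e.2))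
              (insert (v, (graphOf a).src) (insert ((graphOf a).snk, (graphOf t).src)
                (graphOf a).edges))
          rw [hab, hgt]
          simp [mapG, Finset.image_insert, hFv])]
      rw [show (graphOf t').edges = Finset.image (fun e : ℕ × ℕ =>
          (pm (vlist P) (vlist P') e.1, pm (vlist P) (vlist P') e.2)) (graphOf t).edges
        from by rw [hgt]; rfl]
      rfl

lemma ite_glue (v v' : ℕ) (x y t x' y' t' : Prog) (P P' : Prog)
    (hP : graphOf P = graphOf (.ite v x y t))
    (hP' : graphOf P' = graphOf (.ite v' x' y' t'))
    (hvl : vlist P = v :: ((vlist x ++ vlist y) ++ vlist t))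
    (hvl' : vlist P' = v' :: ((vlist x' ++ vlist y') ++ vlist t'))
    (hnd : (vlist P).Nodup)
    (hwx : WF x) (hwy : WF y) (hwt : WF t)
    (hwx' : WF x') (hwy' : WF y') (hwt' : WF t')
    (hcx : code x = code x') (hcy : code y = code y') (hct : code t = code t')
    (hIH : ∀ q ∈ [x, y, t], ∀ q', WF q → WF q' → code q = code q' → Concl q q') :
    Concl P P' := by
  have hfq := comps (vlist P) (vlist P') hnd [x, y, t] [x', y', t'] [v] [v'] [] []
    hIH (.cons hcx (.cons hcy (.cons hct .nil)))
    (by intro q hq; simp only [List.mem_cons, List.not_mem_nil, or_false] at hq; rcases hq with rfl | rfl | rfl; exacts [hwx, hwy, hwt])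
    (by intro q hq; simp only [List.mem_cons, List.not_mem_nil, or_false] at hq; rcases hq with rfl | rfl | rfl; exacts [hwx', hwy', hwt'])
    (by rw [hvl]; simp) (by rw [hvl']; simp) rfl
  obtain ⟨⟨hlx, hgx⟩, ⟨hly, hgy⟩, ⟨hlt, hgt⟩⟩ :
      ((vlist x).length = (vlist x').length ∧ graphOf x' = mapG (pm (vlist P) (vlist P')) (graphOf x)) ∧
      ((vlist y).length = (vlist y').length ∧ graphOf y' = mapG (pm (vlist P) (vlist P')) (graphOf y)) ∧
      ((vlist t).length = (vlist t').length ∧ graphOf t' = mapG (pm (vlist P) (vlist P')) (graphOf t)) := by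
    cases hfq with | cons h1 h2 => cases h2 with | cons h2 h3 => cases h3 with
      | cons h3 _ => exact ⟨h1, h2, h3⟩
  have hFv : pm (vlist P) (vlist P') v = v' := by rw [hvl, hvl']; exact pm_head _ _ _ _
  constructor
  · rw [hvl, hvl']; simp [hlx, hly, hlt]
  · rw [hP, hP', graphOf, graphOf, hgx, hgy, hgt]
    simp [mapG, Finset.image_insert, Finset.image_union, hFv]

/-! ### the main induction -/

theorem main : ∀ (n : ℕ) (P : Prog), sizeOf P < n → ∀ P' : Prog,
    WF P → WF P' → code P = code P' → Concl P P' := by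
  intro n
  induction n with
  | zero => intro P h; omega
  | succ n ih =>
    intro P hsz P' hw hw' hc
    cases P with
    | leaf v =>
      rw [code] at hc
      obtain ⟨v', rfl⟩ := code_inv_leaf hc.symm
      refine ⟨by simp [vlist], ?_⟩
      rw [graphOf, graphOf]
      simp [mapG, trivG, vlist, pm, List.idxOf_cons_self]
    | seq v b =>
      rw [code] at hc
      obtain ⟨v', b', rfl, hcb⟩ := code_inv_seq hc.symm
      have hwb : WF b := by
        obtain ⟨hnd, hok⟩ := hw
        rw [vlist] at hnd
        exact ⟨(List.nodup_cons.1 hnd).2, by simpa [arityOK] using hok⟩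
      have hwb' : WF b' := by
        obtain ⟨hnd, hok⟩ := hw'
        rw [vlist] at hnd
        exact ⟨(List.nodup_cons.1 hnd).2, by simpa [arityOK] using hok⟩
      have hszb : sizeOf b < n := by
        have : sizeOf b < sizeOf (Prog.seq v b) := by simp +arith +decide
        omega
      have hfq := comps (vlist (.seq v b)) (vlist (.seq v' b')) hw.1 [b] [b'] [v] [v'] [] []
        (fun q hq q' h1 h2 h3 => by
          rcases List.mem_singleton.1 hq with rfl; exact ih q hszb q' h1 h2 h3)
        (.cons hcb.symm .nil)
        (fun q hq => by rcases List.mem_singleton.1 hq with rfl; exact hwb)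
        (fun q hq => by rcases List.mem_singleton.1 hq with rfl; exact hwb')
        (by rw [vlist]; simp) (by rw [vlist]; simp) rfl
      obtain ⟨hlen, hg⟩ : (vlist b).length = (vlist b').length ∧
          graphOf b' = mapG (pm (vlist (.seq v b)) (vlist (.seq v' b'))) (graphOf b) := by
        cases hfq with | cons h _ => exact h
      have hFv : pm (vlist (.seq v b)) (vlist (.seq v' b')) v = v' := by
        rw [vlist, vlist]; exact pm_head _ _ _ _
      refine ⟨by rw [vlist, vlist]; simp [hlen], ?_⟩
      rw [graphOf, graphOf, hg]
      simp [mapG, Finset.image_insert, hFv]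
    | ifThen v a t =>
      rw [code] at hc
      obtain ⟨v', a', t', rfl, hsplit⟩ := code_inv_ifThen hc.symm
      obtain ⟨hoka, hokt⟩ : arityOK a ∧ arityOK t := by simpa [arityOK] using hw.2
      obtain ⟨hoka', hokt'⟩ : arityOK a' ∧ arityOK t' := by simpa [arityOK] using hw'.2
      obtain ⟨hca, hct⟩ := splits_of a hoka a' hoka' (code t) (code t')
        (.inr (code_head t)) (.inr (code_head t')) hsplit.symm
      have hnd := hw.1
      rw [vlist] at hnd
      have hnd' := hw'.1
      rw [vlist] at hnd'
      have hwa : WF a := ⟨(List.nodup_append.1 (List.nodup_cons.1 hnd).2).1, hoka⟩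
      have hwt : WF t := ⟨(List.nodup_append.1 (List.nodup_cons.1 hnd).2).2.1, hokt⟩
      have hwa' : WF a' := ⟨(List.nodup_append.1 (List.nodup_cons.1 hnd').2).1, hoka'⟩
      have hwt' : WF t' := ⟨(List.nodup_append.1 (List.nodup_cons.1 hnd').2).2.1, hokt'⟩
      have hsza : sizeOf a < n := by
        have : sizeOf a < sizeOf (Prog.ifThen v a t) := by simp +arith +decide
        omega
      have hszt : sizeOf t < n := by
        have : sizeOf t < sizeOf (Prog.ifThen v a t) := by simp +arith +decide
        omega
      have hfq := comps (vlist (.ifThen v a t)) (vlist (.ifThen v' a' t')) hw.1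
        [a, t] [a', t'] [v] [v'] [] []
        (by intro q hq q' h1 h2 h3
            simp only [List.mem_cons, List.not_mem_nil, or_false] at hq
            rcases hq with rfl | rfl
            exacts [ih q hsza q' h1 h2 h3, ih q hszt q' h1 h2 h3])
        (.cons hca (.cons hct .nil))
        (by intro q hq; simp only [List.mem_cons, List.not_mem_nil, or_false] at hq; rcases hq with rfl | rfl; exacts [hwa, hwt])
        (by intro q hq; simp only [List.mem_cons, List.not_mem_nil, or_false] at hq; rcases hq with rfl | rfl; exacts [hwa', hwt'])
        (by rw [vlist]; simp) (by rw [vlist]; simp) rfl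
      obtain ⟨⟨hla, hga⟩, ⟨hlt, hgt⟩⟩ :
          ((vlist a).length = (vlist a').length ∧
            graphOf a' = mapG (pm (vlist (.ifThen v a t)) (vlist (.ifThen v' a' t'))) (graphOf a)) ∧
          ((vlist t).length = (vlist t').length ∧
            graphOf t' = mapG (pm (vlist (.ifThen v a t)) (vlist (.ifThen v' a' t'))) (graphOf t)) := by
        cases hfq with | cons h1 h2 => cases h2 with | cons h2 _ => exact ⟨h1, h2⟩
      have hFv : pm (vlist (.ifThen v a t)) (vlist (.ifThen v' a' t')) v = v' := by
        rw [vlist, vlist]; exact pm_head _ _ _ _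
      refine ⟨by rw [vlist, vlist]; simp [hla, hlt], ?_⟩
      rw [graphOf, graphOf, hga, hgt]
      simp [mapG, Finset.image_insert, Finset.image_union, hFv]
    | whileP v a t =>
      rw [code] at hc
      obtain ⟨v', a', t', rfl, hsplit⟩ := code_inv_while hw'.2 hc.symm
      obtain ⟨hoka, hokt⟩ : arityOK a ∧ arityOK t := by simpa [arityOK] using hw.2
      obtain ⟨hoka', hokt'⟩ : arityOK a' ∧ arityOK t' := by simpa [arityOK] using hw'.2
      obtain ⟨hca, hct⟩ := splits_of a hoka a' hoka' (code t) (code t')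
        (.inr (code_head t)) (.inr (code_head t')) hsplit.symm
      have hnd := hw.1
      rw [vlist] at hnd
      have hnd' := hw'.1
      rw [vlist] at hnd'
      have hwa : WF a := ⟨(List.nodup_append.1 (List.nodup_cons.1 hnd).2).1, hoka⟩
      have hwt : WF t := ⟨(List.nodup_append.1 (List.nodup_cons.1 hnd).2).2.1, hokt⟩
      have hwa' : WF a' := ⟨(List.nodup_append.1 (List.nodup_cons.1 hnd').2).1, hoka'⟩
      have hwt' : WF t' := ⟨(List.nodup_append.1 (List.nodup_cons.1 hnd').2).2.1, hokt'⟩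
      have hsza : sizeOf a < n := by
        have : sizeOf a < sizeOf (Prog.whileP v a t) := by simp +arith +decide
        omega
      have hszt : sizeOf t < n := by
        have : sizeOf t < sizeOf (Prog.whileP v a t) := by simp +arith +decide
        omega
      have hfq := comps (vlist (.whileP v a t)) (vlist (.whileP v' a' t')) hw.1
        [a, t] [a', t'] [v] [v'] [] []
        (by intro q hq q' h1 h2 h3
            simp only [List.mem_cons, List.not_mem_nil, or_false] at hq
            rcases hq with rfl | rfl
            exacts [ih q hsza q' h1 h2 h3, ih q hszt q' h1 h2 h3])
        (.cons hca (.cons hct .nil))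
        (by intro q hq; simp only [List.mem_cons, List.not_mem_nil, or_false] at hq; rcases hq with rfl | rfl; exacts [hwa, hwt])
        (by intro q hq; simp only [List.mem_cons, List.not_mem_nil, or_false] at hq; rcases hq with rfl | rfl; exacts [hwa', hwt'])
        (by rw [vlist]; simp) (by rw [vlist]; simp) rfl
      obtain ⟨⟨hla, hga⟩, ⟨hlt, hgt⟩⟩ :
          ((vlist a).length = (vlist a').length ∧
            graphOf a' = mapG (pm (vlist (.whileP v a t)) (vlist (.whileP v' a' t'))) (graphOf a)) ∧
          ((vlist t).length = (vlist t').length ∧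
            graphOf t' = mapG (pm (vlist (.whileP v a t)) (vlist (.whileP v' a' t'))) (graphOf t)) := by
        cases hfq with | cons h1 h2 => cases h2 with | cons h2 _ => exact ⟨h1, h2⟩
      have hFv : pm (vlist (.whileP v a t)) (vlist (.whileP v' a' t')) v = v' := by
        rw [vlist, vlist]; exact pm_head _ _ _ _
      refine ⟨by rw [vlist, vlist]; simp [hla, hlt], ?_⟩
      rw [graphOf, graphOf, hga, hgt]
      simp [mapG, Finset.image_insert, Finset.image_union, hFv]
    | repeatP v a t =>
      rw [code] at hc
      obtain ⟨v', a', t', rfl, hsplit⟩ := code_inv_repeat hw'.2 hc.symm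
      obtain ⟨hoka, hokt⟩ : arityOK a ∧ arityOK t := by simpa [arityOK] using hw.2
      obtain ⟨hoka', hokt'⟩ : arityOK a' ∧ arityOK t' := by simpa [arityOK] using hw'.2
      obtain ⟨hca, hct⟩ := splits_of a hoka a' hoka' (code t) (code t')
        (.inr (code_head t)) (.inr (code_head t')) hsplit.symm
      have hnd := hw.1
      rw [vlist] at hnd
      have hnd' := hw'.1
      rw [vlist] at hnd'
      have hwa : WF a := ⟨(List.nodup_append.1 (List.nodup_cons.1 hnd).2).1, hoka⟩
      have hwt : WF t := ⟨(List.nodup_append.1 (List.nodup_cons.1 hnd).2).2.1, hokt⟩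
      have hwa' : WF a' := ⟨(List.nodup_append.1 (List.nodup_cons.1 hnd').2).1, hoka'⟩
      have hwt' : WF t' := ⟨(List.nodup_append.1 (List.nodup_cons.1 hnd').2).2.1, hokt'⟩
      have hsza : sizeOf a < n := by
        have : sizeOf a < sizeOf (Prog.repeatP v a t) := by simp +arith +decide
        omega
      have hszt : sizeOf t < n := by
        have : sizeOf t < sizeOf (Prog.repeatP v a t) := by simp +arith +decide
        omega
      have hfq := comps (vlist (.repeatP v a t)) (vlist (.repeatP v' a' t')) hw.1
        [a, t] [a', t'] [v] [v'] [] []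
        (by intro q hq q' h1 h2 h3
            simp only [List.mem_cons, List.not_mem_nil, or_false] at hq
            rcases hq with rfl | rfl
            exacts [ih q hsza q' h1 h2 h3, ih q hszt q' h1 h2 h3])
        (.cons hca (.cons hct .nil))
        (by intro q hq; simp only [List.mem_cons, List.not_mem_nil, or_false] at hq; rcases hq with rfl | rfl; exacts [hwa, hwt])
        (by intro q hq; simp only [List.mem_cons, List.not_mem_nil, or_false] at hq; rcases hq with rfl | rfl; exacts [hwa', hwt'])
        (by rw [vlist]; simp) (by rw [vlist]; simp) rfl
      obtain ⟨⟨hla, hga⟩, ⟨hlt, hgt⟩⟩ :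
          ((vlist a).length = (vlist a').length ∧
            graphOf a' = mapG (pm (vlist (.repeatP v a t)) (vlist (.repeatP v' a' t'))) (graphOf a)) ∧
          ((vlist t).length = (vlist t').length ∧
            graphOf t' = mapG (pm (vlist (.repeatP v a t)) (vlist (.repeatP v' a' t'))) (graphOf t)) := by
        cases hfq with | cons h1 h2 => cases h2 with | cons h2 _ => exact ⟨h1, h2⟩
      have hFv : pm (vlist (.repeatP v a t)) (vlist (.repeatP v' a' t')) v = v' := by
        rw [vlist, vlist]; exact pm_head _ _ _ _
      refine ⟨by rw [vlist, vlist]; simp [hla, hlt], ?_⟩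
      rw [graphOf, graphOf, hga, hgt]
      simp [mapG, Finset.image_insert, Finset.image_union, hFv]
    | ite v a b t =>
      rw [code] at hc
      obtain ⟨v', a', b', t', rfl, hsplit⟩ := code_inv_ite hw'.2 hc.symm
      obtain ⟨hoka, hokb, hokt⟩ : arityOK a ∧ arityOK b ∧ arityOK t := by
        simpa [arityOK] using hw.2
      obtain ⟨hoka', hokb', hokt'⟩ : arityOK a' ∧ arityOK b' ∧ arityOK t' := by
        simpa [arityOK] using hw'.2
      have hnd := hw.1
      rw [vlist] at hnd
      have hnd' := hw'.1
      rw [vlist] at hnd'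
      have hsza : sizeOf a < n := by
        have : sizeOf a < sizeOf (Prog.ite v a b t) := by simp +arith +decide
        omega
      have hszb : sizeOf b < n := by
        have : sizeOf b < sizeOf (Prog.ite v a b t) := by simp +arith +decide
        omega
      have hszt : sizeOf t < n := by
        have : sizeOf t < sizeOf (Prog.ite v a b t) := by simp +arith +decide
        omega

      by_cases hab : lexLe (code a) (code b) <;> by_cases hab' : lexLe (code a') (code b')
      · rw [if_pos hab'] at hsplit
        rw [if_pos hab] at hsplit
        have hkey : code a' ++ (code b' ++ code t') = code a ++ (code b ++ code t) := by
          simpa [List.append_assoc] using hsplit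
        obtain ⟨hca, hrest⟩ := splits_of a' hoka' a hoka _ _
          (okT_code_append b' (code t')) (okT_code_append b (code t)) hkey
        obtain ⟨hcb, hct⟩ := splits_of b' hokb' b hokb _ _
          (.inr (code_head t')) (.inr (code_head t)) hrest
        rw [if_pos hab] at hnd
        rw [if_pos hab'] at hnd'
        exact ite_glue v v' a b t a' b' t' _ _ rfl rfl
          (by rw [vlist, if_pos hab]) (by rw [vlist, if_pos hab']) hw.1
          ⟨(List.nodup_append.1 (List.nodup_append.1 (List.nodup_cons.1 hnd).2).1).1, hoka⟩
          ⟨(List.nodup_append.1 (List.nodup_append.1 (List.nodup_cons.1 hnd).2).1).2.1, hokb⟩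
          ⟨(List.nodup_append.1 (List.nodup_cons.1 hnd).2).2.1, hokt⟩
          ⟨(List.nodup_append.1 (List.nodup_append.1 (List.nodup_cons.1 hnd').2).1).1, hoka'⟩
          ⟨(List.nodup_append.1 (List.nodup_append.1 (List.nodup_cons.1 hnd').2).1).2.1, hokb'⟩
          ⟨(List.nodup_append.1 (List.nodup_cons.1 hnd').2).2.1, hokt'⟩
          hca.symm hcb.symm hct.symm
          (by intro q hq q' h1 h2 h3
              simp only [List.mem_cons, List.not_mem_nil, or_false] at hq
              rcases hq with rfl | rfl | rfl
              exacts [ih q hsza q' h1 h2 h3, ih q hszb q' h1 h2 h3, ih q hszt q' h1 h2 h3])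
      · rw [if_neg hab'] at hsplit
        rw [if_pos hab] at hsplit
        have hkey : code b' ++ (code a' ++ code t') = code a ++ (code b ++ code t) := by
          simpa [List.append_assoc] using hsplit
        obtain ⟨hca, hrest⟩ := splits_of b' hokb' a hoka _ _
          (okT_code_append a' (code t')) (okT_code_append b (code t)) hkey
        obtain ⟨hcb, hct⟩ := splits_of a' hoka' b hokb _ _
          (.inr (code_head t')) (.inr (code_head t)) hrest
        rw [if_pos hab] at hnd
        rw [if_neg hab'] at hnd'
        exact ite_glue v v' a b t b' a' t' _ _ rfl (graphOf_ite_comm v' a' b' t')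
          (by rw [vlist, if_pos hab]) (by rw [vlist, if_neg hab']) hw.1
          ⟨(List.nodup_append.1 (List.nodup_append.1 (List.nodup_cons.1 hnd).2).1).1, hoka⟩
          ⟨(List.nodup_append.1 (List.nodup_append.1 (List.nodup_cons.1 hnd).2).1).2.1, hokb⟩
          ⟨(List.nodup_append.1 (List.nodup_cons.1 hnd).2).2.1, hokt⟩
          ⟨(List.nodup_append.1 (List.nodup_append.1 (List.nodup_cons.1 hnd').2).1).1, hokb'⟩
          ⟨(List.nodup_append.1 (List.nodup_append.1 (List.nodup_cons.1 hnd').2).1).2.1, hoka'⟩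
          ⟨(List.nodup_append.1 (List.nodup_cons.1 hnd').2).2.1, hokt'⟩
          hca.symm hcb.symm hct.symm
          (by intro q hq q' h1 h2 h3
              simp only [List.mem_cons, List.not_mem_nil, or_false] at hq
              rcases hq with rfl | rfl | rfl
              exacts [ih q hsza q' h1 h2 h3, ih q hszb q' h1 h2 h3, ih q hszt q' h1 h2 h3])
      · rw [if_pos hab'] at hsplit
        rw [if_neg hab] at hsplit
        have hkey : code a' ++ (code b' ++ code t') = code b ++ (code a ++ code t) := by
          simpa [List.append_assoc] using hsplit
        obtain ⟨hca, hrest⟩ := splits_of a' hoka' b hokb _ _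
          (okT_code_append b' (code t')) (okT_code_append a (code t)) hkey
        obtain ⟨hcb, hct⟩ := splits_of b' hokb' a hoka _ _
          (.inr (code_head t')) (.inr (code_head t)) hrest
        rw [if_neg hab] at hnd
        rw [if_pos hab'] at hnd'
        exact ite_glue v v' b a t a' b' t' _ _ (graphOf_ite_comm v a b t) rfl
          (by rw [vlist, if_neg hab]) (by rw [vlist, if_pos hab']) hw.1
          ⟨(List.nodup_append.1 (List.nodup_append.1 (List.nodup_cons.1 hnd).2).1).1, hokb⟩
          ⟨(List.nodup_append.1 (List.nodup_append.1 (List.nodup_cons.1 hnd).2).1).2.1, hoka⟩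
          ⟨(List.nodup_append.1 (List.nodup_cons.1 hnd).2).2.1, hokt⟩
          ⟨(List.nodup_append.1 (List.nodup_append.1 (List.nodup_cons.1 hnd').2).1).1, hoka'⟩
          ⟨(List.nodup_append.1 (List.nodup_append.1 (List.nodup_cons.1 hnd').2).1).2.1, hokb'⟩
          ⟨(List.nodup_append.1 (List.nodup_cons.1 hnd').2).2.1, hokt'⟩
          hca.symm hcb.symm hct.symm
          (by intro q hq q' h1 h2 h3
              simp only [List.mem_cons, List.not_mem_nil, or_false] at hq
              rcases hq with rfl | rfl | rfl
              exacts [ih q hszb q' h1 h2 h3, ih q hsza q' h1 h2 h3, ih q hszt q' h1 h2 h3])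
      · rw [if_neg hab'] at hsplit
        rw [if_neg hab] at hsplit
        have hkey : code b' ++ (code a' ++ code t') = code b ++ (code a ++ code t) := by
          simpa [List.append_assoc] using hsplit
        obtain ⟨hca, hrest⟩ := splits_of b' hokb' b hokb _ _
          (okT_code_append a' (code t')) (okT_code_append a (code t)) hkey
        obtain ⟨hcb, hct⟩ := splits_of a' hoka' a hoka _ _
          (.inr (code_head t')) (.inr (code_head t)) hrest
        rw [if_neg hab] at hnd
        rw [if_neg hab'] at hnd'
        exact ite_glue v v' b a t b' a' t' _ _ (graphOf_ite_comm v a b t)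
          (graphOf_ite_comm v' a' b' t')
          (by rw [vlist, if_neg hab]) (by rw [vlist, if_neg hab']) hw.1
          ⟨(List.nodup_append.1 (List.nodup_append.1 (List.nodup_cons.1 hnd).2).1).1, hokb⟩
          ⟨(List.nodup_append.1 (List.nodup_append.1 (List.nodup_cons.1 hnd).2).1).2.1, hoka⟩
          ⟨(List.nodup_append.1 (List.nodup_cons.1 hnd).2).2.1, hokt⟩
          ⟨(List.nodup_append.1 (List.nodup_append.1 (List.nodup_cons.1 hnd').2).1).1, hokb'⟩
          ⟨(List.nodup_append.1 (List.nodup_append.1 (List.nodup_cons.1 hnd').2).1).2.1, hoka'⟩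
          ⟨(List.nodup_append.1 (List.nodup_cons.1 hnd').2).2.1, hokt'⟩
          hca.symm hcb.symm hct.symm
          (by intro q hq q' h1 h2 h3
              simp only [List.mem_cons, List.not_mem_nil, or_false] at hq
              rcases hq with rfl | rfl | rfl
              exacts [ih q hszb q' h1 h2 h3, ih q hsza q' h1 h2 h3, ih q hszt q' h1 h2 h3])
    | pcase v bs t =>
      rw [code_pcase] at hc
      obtain ⟨h3bs, hbsOK, hokt⟩ : 3 ≤ bs.length ∧ (∀ q ∈ bs, arityOK q) ∧ arityOK t := by
        simpa [arityOK] using hw.2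
      obtain ⟨v', bs', t', rfl, hlenbs, -⟩ := code_inv_pcase h3bs hc.symm
      rw [code_pcase] at hc
      obtain ⟨-, heq⟩ : ((bs.length + 4 : ℕ) = bs'.length + 4) ∧
          (sortProgs bs).flatMap code ++ code t = (sortProgs bs').flatMap code ++ code t' := by
        have h1 := hc
        rw [List.cons.injEq, List.cons.injEq] at h1
        exact ⟨h1.2.1, h1.2.2⟩
      obtain ⟨-, hbsOK', hokt'⟩ : 3 ≤ bs'.length ∧ (∀ q ∈ bs', arityOK q) ∧ arityOK t' := by
        simpa [arityOK] using hw'.2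
      have hnd := hw.1
      rw [vlist_pcase] at hnd
      have hnd' := hw'.1
      rw [vlist_pcase] at hnd'
      have hndq : ∀ q ∈ sortProgs bs, (vlist q).Nodup :=
        nodup_flatMap (List.nodup_append.1 (List.nodup_cons.1 hnd).2).1
      have hndq' : ∀ q ∈ sortProgs bs', (vlist q).Nodup :=
        nodup_flatMap (List.nodup_append.1 (List.nodup_cons.1 hnd').2).1
      have hwq : ∀ q ∈ sortProgs bs, WF q := fun q hq =>
        ⟨hndq q hq, hbsOK q ((sortProgs_perm bs).subset hq)⟩
      have hwq' : ∀ q ∈ sortProgs bs', WF q := fun q hq =>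
        ⟨hndq' q hq, hbsOK' q ((sortProgs_perm bs').subset hq)⟩
      have hwt : WF t := ⟨(List.nodup_append.1 (List.nodup_cons.1 hnd).2).2.1, hokt⟩
      have hwt' : WF t' := ⟨(List.nodup_append.1 (List.nodup_cons.1 hnd').2).2.1, hokt'⟩
      have heq2 : ((sortProgs bs).map code).flatten ++ code t
          = ((sortProgs bs').map code).flatten ++ code t' := by
        rw [← List.flatMap, ← List.flatMap]; exact heq
      obtain ⟨hmapeq, hct⟩ := flatten_split ((sortProgs bs).map code) ((sortProgs bs').map code)
        (by intro c hcmem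
            obtain ⟨q, hq, rfl⟩ := List.mem_map.1 hcmem
            exact ⟨splits_of q (hwq q hq).2, code_head q⟩)
        (by intro c hcmem
            obtain ⟨q, hq, rfl⟩ := List.mem_map.1 hcmem
            exact ⟨q, (hwq' q hq).2, rfl⟩)
        (by simp [sortProgs, hlenbs])
        (code t) (code t') (.inr (code_head t)) (.inr (code_head t')) heq2
      have hfcodes : List.Forall₂ (fun q q' => code q = code q') (sortProgs bs) (sortProgs bs') :=
        forall₂_of_map_eq hmapeq
      have hszq : ∀ q ∈ sortProgs bs, sizeOf q < n := by
        intro q hq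
        have h1 : sizeOf q < sizeOf bs := List.sizeOf_lt_of_mem ((sortProgs_perm bs).subset hq)
        have h2 : sizeOf bs < sizeOf (Prog.pcase v bs t) := by simp +arith +decide
        omega
      have hszt : sizeOf t < n := by
        have : sizeOf t < sizeOf (Prog.pcase v bs t) := by simp +arith +decide
        omega
      exact pcase_glue v v' (sortProgs bs) (sortProgs bs') t t' _ _
        (graphOf_pcase_sort v bs t) (graphOf_pcase_sort v' bs' t')
        (vlist_pcase v bs t) (vlist_pcase v' bs' t') hw.1
        hwq hwq' hwt hwt' hfcodes hct
        (fun q hq q' h1 h2 h3 => ih q (hszq q hq) q' h1 h2 h3)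
        (fun q' h1 h2 h3 => ih t hszt q' h1 h2 h3)

/-- If C(G) = C(G'), the map sending the vertex of the i-th 1 of
C(G) to the vertex of the i-th 1 of C(G') is a graph isomorphism. -/
theorem code_eq_gives_iso (P P' : Prog) (hP : WF P) (hP' : WF P')
    (hc : code P = code P') :
    IsIsoFun (fun v => (vlist P').getD ((vlist P).idxOf v) 0)
        (graphOf P) (graphOf P') ∧
      (vlist P').getD ((vlist P).idxOf (graphOf P).src) 0 = (graphOf P').src := by
  obtain ⟨hlen, hg⟩ := main (sizeOf P + 1) P (by omega) P' hP hP' hc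
  have hmem : ∀ x ∈ (graphOf P).verts, x ∈ vlist P := by
    intro x hx
    rw [verts_eq, List.mem_toFinset] at hx
    exact hx
  have hinj : Set.InjOn (pm (vlist P) (vlist P')) ↑(graphOf P).verts := by
    intro x hx y hy hxy
    exact pm_inj hP.1 hP'.1 hlen (hmem x hx) (hmem y hy) hxy
  have hverts : (graphOf P').verts = (graphOf P).verts.image (pm (vlist P) (vlist P')) := by
    rw [hg]; rfl
  refine ⟨⟨?_, ?_⟩, ?_⟩
  · show Set.BijOn (pm (vlist P) (vlist P')) ↑(graphOf P).verts ↑(graphOf P').verts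
    rw [hverts, Finset.coe_image]
    exact hinj.bijOn_image
  · intro a ha b hb
    constructor
    · intro hab
      rw [hg]
      exact Finset.mem_image_of_mem
        (fun e : ℕ × ℕ => (pm (vlist P) (vlist P') e.1, pm (vlist P) (vlist P') e.2)) hab
    · intro hab
      rw [hg] at hab
      have hab' : ((fun v => (vlist P').getD ((vlist P).idxOf v) 0) a,
          (fun v => (vlist P').getD ((vlist P).idxOf v) 0) b) ∈
          (graphOf P).edges.image
            (fun e => (pm (vlist P) (vlist P') e.1, pm (vlist P) (vlist P') e.2)) := hab
      rw [Finset.mem_image] at hab'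
      obtain ⟨⟨c, d⟩, hcd, hcd2⟩ := hab'
      dsimp only at hcd2
      rw [Prod.mk.injEq] at hcd2
      obtain ⟨h1, h2⟩ := hcd2
      have hca : c = a := pm_inj hP.1 hP'.1 hlen (hmem c (edge_mem' P _ hcd).1) (hmem a ha) h1
      have hdb : d = b := pm_inj hP.1 hP'.1 hlen (hmem d (edge_mem' P _ hcd).2) (hmem b hb) h2
      rw [← hca, ← hdb]
      exact hcd
  · show pm (vlist P) (vlist P') (graphOf P).src = (graphOf P').src
    rw [hg]; rfl

end DJ
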